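/- The stationary states λ ∈ [0,Λ] of ε-PQM2 (in-flux min{δ, (Λ−λ)/ε} equals out-flux min{λ/ε, σ}) are: λ = Λ − εσ if δ > σ; λ = εδ if δ < σ; any λ ∈ [εδ, Λ−εσ] if δ = σ, provided ε(δ+σ) ≤ Λ. -/

import Mathlib

/-- Stationary states of ε-PQM2. -/
theorem stmt_13 (δ σ Λ ε : ℝ) (hδ : 0 ≤ δ) (hσ : 0 ≤ σ) (hΛ : 0 < Λ) (hε : 0 < ε)
    (hcond : ε * (δ + σ) ≤ Λ) :
    ∀ lam ∈ Set.Icc (0 : ℝ) Λ,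
      (σ < δ → (min δ ((Λ - lam) / ε) = min (lam / ε) σ ↔ lam = Λ - ε * σ)) ∧
      (δ < σ → (min δ ((Λ - lam) / ε) = min (lam / ε) σ ↔ lam = ε * δ)) ∧
      (δ = σ → (min δ ((Λ - lam) / ε) = min (lam / ε) σ ↔
        lam ∈ Set.Icc (ε * δ) (Λ - ε * σ))) := by
  intro lam hlam
  obtain ⟨h0, h1⟩ := hlam
  have hne := hε.ne'
  constructor
  · intro hlt
    have hmul : ε * σ < ε * δ := mul_lt_mul_of_pos_left hlt hε
    constructor
    · intro h
      simp only [min_def] at h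
      split_ifs at h with h2 h3 h3 <;>
        simp only [div_le_iff₀ hε, le_div_iff₀ hε, not_le] at h2 h3 <;>
        (try rw [div_eq_div_iff hε hε] at h) <;> (try rw [eq_div_iff hne] at h) <;> (try rw [div_eq_iff hne] at h) <;> nlinarith
    · intro h
      subst h
      have e1 : (Λ - (Λ - ε * σ)) / ε = σ := by field_simp; ring
      have e2 : min δ σ = σ := min_eq_right hlt.le
      have e3 : σ ≤ (Λ - ε * σ) / ε := by rw [le_div_iff₀ hε]; nlinarith
      rw [e1, e2, min_eq_right e3]
  constructor
  · intro hlt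
    have hmul : ε * δ < ε * σ := mul_lt_mul_of_pos_left hlt hε
    constructor
    · intro h
      simp only [min_def] at h
      split_ifs at h with h2 h3 h3 <;>
        simp only [div_le_iff₀ hε, le_div_iff₀ hε, not_le] at h2 h3 <;>
        (try rw [div_eq_div_iff hε hε] at h) <;> (try rw [eq_div_iff hne] at h) <;> (try rw [div_eq_iff hne] at h) <;> nlinarith
    · intro h
      subst h
      have e1 : ε * δ / ε = δ := by field_simp
      have e2 : min δ σ = δ := min_eq_left hlt.le
      have e3 : δ ≤ (Λ - ε * δ) / ε := by rw [le_div_iff₀ hε]; nlinarith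
      rw [e1, e2, min_eq_left e3]
  · intro heq
    subst heq
    constructor
    · intro h
      simp only [min_def] at h
      constructor
      · split_ifs at h with h2 h3 h3 <;>
          simp only [div_le_iff₀ hε, le_div_iff₀ hε, not_le] at h2 h3 <;>
          (try rw [div_eq_div_iff hε hε] at h) <;> (try rw [eq_div_iff hne] at h) <;> (try rw [div_eq_iff hne] at h) <;> nlinarith
      · split_ifs at h with h2 h3 h3 <;>
          simp only [div_le_iff₀ hε, le_div_iff₀ hε, not_le] at h2 h3 <;>
          (try rw [div_eq_div_iff hε hε] at h) <;> (try rw [eq_div_iff hne] at h) <;> (try rw [div_eq_iff hne] at h) <;> nlinarith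
    · rintro ⟨ha, hb⟩
      have e2 : min δ ((Λ - lam) / ε) = δ := min_eq_left (by rw [le_div_iff₀ hε]; nlinarith)
      have e3 : min (lam / ε) δ = δ := min_eq_right (by rw [le_div_iff₀ hε]; nlinarith)
      rw [e2, e3]
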